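/- On the interval (0, π/2), the functions f1(t) = −sin t, f2(t) = (1/8)·(4 − 9·sin²t)·cos t, f3(t) = −(1/8)·sin²t·cos t, F(t) = (3/8)·sin²t·cos t solve system (F) with μ = 1, satisfy the constraint (C) at every point, and satisfy f1 < 0, F > 0 and F'² − (f2' + f1/4)·(f3' − f1/4) > 0 at every point. (These are the coefficient functions of the homogeneous nearly Kähler structure on S⁶ = G₂/SU₃ along a normal geodesic for the SU(2)×SU(2)-action.) -/

import Mathlib

/-- Podestà–Spiro: the coefficient functions of the homogeneous nearly Kähler structure
on `S⁶ = G₂/SU₃` along a normal geodesic solve system (F) with `μ = 1`, satisfy the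
constraint (C), and satisfy the positivity conditions on `(0, π/2)`. -/
theorem stmt_6
    (μ : ℝ) (hμ : μ = 1)
    (f1 f2 f3 F : ℝ → ℝ)
    (hf1 : ∀ t, f1 t = -Real.sin t)
    (hf2 : ∀ t, f2 t = (1 / 8) * (4 - 9 * Real.sin t ^ 2) * Real.cos t)
    (hf3 : ∀ t, f3 t = -(1 / 8) * Real.sin t ^ 2 * Real.cos t)
    (hF : ∀ t, F t = (3 / 8) * Real.sin t ^ 2 * Real.cos t) :
    ∀ t ∈ Set.Ioo 0 (Real.pi / 2),
      (deriv (fun u => (deriv f2 u + f1 u / 4) * f1 u) t + 12 * μ * f1 t * f2 t = 0 ∧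
       deriv (fun u => (deriv f3 u - f1 u / 4) * f1 u) t + 12 * μ * f1 t * f3 t = 0 ∧
       deriv (fun u => deriv F u * f1 u) t - 4 * F t / f1 t + 12 * μ * f1 t * F t = 0 ∧
       f1 t * (deriv f2 t - deriv f3 t + f1 t / 2) + 48 * μ * (f2 t * f3 t - F t ^ 2) = 0) ∧
      4 * F t ^ 2 -
        ((deriv F t) ^ 2 - (deriv f2 t + f1 t / 4) * (deriv f3 t - f1 t / 4)) * f1 t ^ 2 = 0 ∧
      f1 t < 0 ∧
      0 < F t ∧
      0 < (deriv F t) ^ 2 - (deriv f2 t + f1 t / 4) * (deriv f3 t - f1 t / 4) := by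
  subst hμ
  -- pointwise derivative formulas
  have hD2 : ∀ u, HasDerivAt f2
      ((-18 * Real.sin u * Real.cos u ^ 2 - 4 * Real.sin u + 9 * Real.sin u ^ 3) / 8) u := by
    intro u
    have h : HasDerivAt (fun v => (1 / 8) * (4 - 9 * Real.sin v ^ 2) * Real.cos v)
        ((1 / 8 * -(9 * ((2 : ℕ) * Real.sin u ^ 1 * Real.cos u))) * Real.cos u
          + (1 / 8 * (4 - 9 * Real.sin u ^ 2)) * -Real.sin u) u :=
      (((((Real.hasDerivAt_sin u).pow 2).const_mul 9).const_sub 4).const_mul (1 / 8)).mul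
        (Real.hasDerivAt_cos u)
    rw [funext hf2]
    convert h using 1
    push_cast; ring
  have hD3 : ∀ u, HasDerivAt f3
      ((-2 * Real.sin u * Real.cos u ^ 2 + Real.sin u ^ 3) / 8) u := by
    intro u
    have h : HasDerivAt (fun v => -(1 / 8) * Real.sin v ^ 2 * Real.cos v)
        ((-(1 / 8) * ((2 : ℕ) * Real.sin u ^ 1 * Real.cos u)) * Real.cos u
          + (-(1 / 8) * Real.sin u ^ 2) * -Real.sin u) u :=
      ((((Real.hasDerivAt_sin u).pow 2).const_mul (-(1 / 8))).mul (Real.hasDerivAt_cos u))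
    rw [funext hf3]
    convert h using 1
    push_cast; ring
  have hDF : ∀ u, HasDerivAt F
      ((6 * Real.sin u * Real.cos u ^ 2 - 3 * Real.sin u ^ 3) / 8) u := by
    intro u
    have h : HasDerivAt (fun v => (3 / 8) * Real.sin v ^ 2 * Real.cos v)
        (((3 / 8) * ((2 : ℕ) * Real.sin u ^ 1 * Real.cos u)) * Real.cos u
          + ((3 / 8) * Real.sin u ^ 2) * -Real.sin u) u :=
      ((((Real.hasDerivAt_sin u).pow 2).const_mul (3 / 8)).mul (Real.hasDerivAt_cos u))
    rw [funext hF]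
    convert h using 1
    push_cast; ring
  intro t ht
  obtain ⟨ht0, ht1⟩ := ht
  have hpi := Real.pi_pos
  have hs : 0 < Real.sin t := Real.sin_pos_of_pos_of_lt_pi ht0 (by linarith)
  have hc : 0 < Real.cos t := Real.cos_pos_of_mem_Ioo ⟨by linarith, ht1⟩
  have hp : Real.sin t ^ 2 + Real.cos t ^ 2 = 1 := Real.sin_sq_add_cos_sq t
  have hs' := Real.hasDerivAt_sin t
  have hc' := Real.hasDerivAt_cos t
  -- composite functions rewritten explicitly
  have eg2 : (fun u => (deriv f2 u + f1 u / 4) * f1 u)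
      = fun u => (18 * (Real.sin u ^ 2 * Real.cos u ^ 2) - 9 * Real.sin u ^ 4
          + 6 * Real.sin u ^ 2) / 8 := by
    funext u; rw [(hD2 u).deriv, hf1 u]; ring
  have eg3 : (fun u => (deriv f3 u - f1 u / 4) * f1 u)
      = fun u => (2 * (Real.sin u ^ 2 * Real.cos u ^ 2) - Real.sin u ^ 4
          - 2 * Real.sin u ^ 2) / 8 := by
    funext u; rw [(hD3 u).deriv, hf1 u]; ring
  have egF : (fun u => deriv F u * f1 u)
      = fun u => (-6 * (Real.sin u ^ 2 * Real.cos u ^ 2) + 3 * Real.sin u ^ 4) / 8 := by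
    funext u; rw [(hDF u).deriv, hf1 u]; ring
  have hg2 : HasDerivAt (fun u => (18 * (Real.sin u ^ 2 * Real.cos u ^ 2) - 9 * Real.sin u ^ 4
      + 6 * Real.sin u ^ 2) / 8) _ t := (((((hs'.pow 2).mul (hc'.pow 2)).const_mul 18).sub
      ((hs'.pow 4).const_mul 9)).add ((hs'.pow 2).const_mul 6)).div_const 8
  have hg3 : HasDerivAt (fun u => (2 * (Real.sin u ^ 2 * Real.cos u ^ 2) - Real.sin u ^ 4
      - 2 * Real.sin u ^ 2) / 8) _ t := (((((hs'.pow 2).mul (hc'.pow 2)).const_mul 2).sub (hs'.pow 4)).sub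
      ((hs'.pow 2).const_mul 2)).div_const 8
  have hgF : HasDerivAt (fun u => (-6 * (Real.sin u ^ 2 * Real.cos u ^ 2) + 3 * Real.sin u ^ 4) / 8)
      _ t := ((((hs'.pow 2).mul (hc'.pow 2)).const_mul (-6)).add
      ((hs'.pow 4).const_mul 3)).div_const 8
  have hdiv : 4 * F t / f1 t = -(3 / 2) * Real.sin t * Real.cos t := by
    rw [hF, hf1, div_eq_iff (neg_ne_zero.mpr hs.ne')]; ring
  refine ⟨⟨?_, ?_, ?_, ?_⟩, ?_, ?_, ?_, ?_⟩
  · rw [eg2, hg2.deriv, hf1, hf2]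
    push_cast [Pi.pow_apply]
    linear_combination (9 * Real.sin t * Real.cos t / 2) * hp
  · rw [eg3, hg3.deriv, hf1, hf3]
    push_cast [Pi.pow_apply]
    linear_combination (Real.sin t * Real.cos t / 2) * hp
  · rw [egF, hgF.deriv, hdiv, hf1, hF]
    push_cast [Pi.pow_apply]
    linear_combination (-(3 / 2) * Real.sin t * Real.cos t) * hp
  · rw [(hD2 t).deriv, (hD3 t).deriv, hf1, hf2, hf3, hF]
    linear_combination (-(Real.sin t ^ 2)) * hp
  · rw [(hDF t).deriv, (hD2 t).deriv, (hD3 t).deriv, hf1, hF]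
    linear_combination ((3 / 16) * Real.sin t ^ 4) * hp
  · rw [hf1]; linarith
  · rw [hF]; positivity
  · rw [(hDF t).deriv, (hD2 t).deriv, (hD3 t).deriv, hf1]
    have key : ((6 * Real.sin t * Real.cos t ^ 2 - 3 * Real.sin t ^ 3) / 8) ^ 2 -
        ((-18 * Real.sin t * Real.cos t ^ 2 - 4 * Real.sin t + 9 * Real.sin t ^ 3) / 8
            + -Real.sin t / 4) *
          ((-2 * Real.sin t * Real.cos t ^ 2 + Real.sin t ^ 3) / 8 - -Real.sin t / 4)
        = 9 * Real.sin t ^ 2 * Real.cos t ^ 2 / 16 := by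
      linear_combination (-(3 / 16) * Real.sin t ^ 2) * hp
    rw [key]; positivity
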